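/- Let A be a real 3×3 matrix, g ∈ ℝ³, and let τ₁, τ₂ ∈ ℝ³ be linearly independent. Set ν = (τ₁ × τ₂)/‖τ₁ × τ₂‖, P = I₃ − ν νᵀ, and for t near 0 define n(t) = (((I + tA)τ₁) × ((I + tA)τ₂)) / ‖((I + tA)τ₁) × ((I + tA)τ₂)‖, P(t) = I₃ − n(t) n(t)ᵀ, and G(t) = P(t) ((I + tA)ᵀ)⁻¹ g. Then G is differentiable at t = 0, G(0) = P g, and G′(0) = −P Aᵀ (P g) + ⟨P g, P Aᵀ ν⟩ ν. -/

import Mathlib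

open Matrix

attribute [local instance] Matrix.frobeniusNormedAddCommGroup Matrix.frobeniusNormedRing
  Matrix.frobeniusNormedSpace Matrix.frobeniusNormedAlgebra

private lemma hasDerivAt_dot3 {f h : ℝ → Fin 3 → ℝ} {f' h' : Fin 3 → ℝ} {x : ℝ}
    (hf : HasDerivAt f f' x) (hh : HasDerivAt h h' x) :
    HasDerivAt (fun t => f t ⬝ᵥ h t) (f' ⬝ᵥ h x + f x ⬝ᵥ h') x := by
  have hf' := hasDerivAt_pi.mp hf
  have hh' := hasDerivAt_pi.mp hh
  have key : HasDerivAt (fun t => ∑ i, f t i * h t i)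
      (∑ i, (f' i * h x i + f x i * h' i)) x :=
    HasDerivAt.fun_sum fun i _ => (hf' i).mul (hh' i)
  simpa [dotProduct, Finset.sum_add_distrib] using key

private lemma proj_mulVec (v x : Fin 3 → ℝ) :
    (1 - vecMulVec ((Real.sqrt (v ⬝ᵥ v))⁻¹ • v) ((Real.sqrt (v ⬝ᵥ v))⁻¹ • v)).mulVec x
      = x - ((v ⬝ᵥ x) / (v ⬝ᵥ v)) • v := by
  rw [Matrix.sub_mulVec, Matrix.one_mulVec]
  rcases eq_or_ne v 0 with rfl | hv
  · funext i
    simp [vecMulVec, Matrix.mulVec, dotProduct]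
  · have hQ : 0 < v ⬝ᵥ v := by
      refine lt_of_le_of_ne (Finset.sum_nonneg fun i _ => mul_self_nonneg _) ?_
      exact fun h => hv (dotProduct_self_eq_zero.mp h.symm)
    set s := Real.sqrt (v ⬝ᵥ v) with hsdef
    have hs : s * s = v ⬝ᵥ v := Real.mul_self_sqrt hQ.le
    have hs0 : s ≠ 0 := by positivity
    have hs' : v 0 * v 0 + (v 1 * v 1 + v 2 * v 2) = s * s := by
      rw [hs]; simp [dotProduct, Fin.sum_univ_three]; ring
    funext i
    simp only [Pi.sub_apply, Matrix.mulVec, dotProduct, vecMulVec_apply, Pi.smul_apply,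
      smul_eq_mul, Fin.sum_univ_three]
    rw [show v 0 * x 0 + v 1 * x 1 + v 2 * x 2 = v 0 * x 0 + (v 1 * x 1 + v 2 * x 2) by ring]
    rw [show v 0 * v 0 + v 1 * v 1 + v 2 * v 2 = v 0 * v 0 + (v 1 * v 1 + v 2 * v 2) by ring, hs']
    field_simp
    ring

private lemma cross_deriv (A : Matrix (Fin 3) (Fin 3) ℝ) (a b : Fin 3 → ℝ) :
    crossProduct (A.mulVec a) b + crossProduct a (A.mulVec b)
      = A.trace • crossProduct a b - Aᵀ.mulVec (crossProduct a b) := by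
  funext i
  fin_cases i <;>
    simp [cross_apply, Matrix.mulVec, dotProduct, Matrix.trace, Matrix.diag,
      Fin.sum_univ_three, Matrix.transpose_apply, Pi.smul_apply] <;> ring

private noncomputable def entryCLM (i j : Fin 3) : Matrix (Fin 3) (Fin 3) ℝ →L[ℝ] ℝ :=
  LinearMap.toContinuousLinearMap
    { toFun := fun M => M i j
      map_add' := fun _ _ => rfl
      map_smul' := fun _ _ => rfl }

@[simp] private lemma entryCLM_apply (i j : Fin 3) (M : Matrix (Fin 3) (Fin 3) ℝ) :
    entryCLM i j M = M i j := rfl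

set_option maxHeartbeats 1600000 in
open Matrix in
theorem stmt13 (A : Matrix (Fin 3) (Fin 3) ℝ) (g : Fin 3 → ℝ)
    (τ₁ τ₂ : Fin 3 → ℝ) (hτ : LinearIndependent ℝ ![τ₁, τ₂])
    (ν : Fin 3 → ℝ)
    (hν : ν = (Real.sqrt (crossProduct τ₁ τ₂ ⬝ᵥ crossProduct τ₁ τ₂))⁻¹ • crossProduct τ₁ τ₂)
    (P : Matrix (Fin 3) (Fin 3) ℝ) (hP : P = 1 - vecMulVec ν ν)
    (n : ℝ → Fin 3 → ℝ)
    (hn : ∀ t : ℝ, n t =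
      (Real.sqrt (crossProduct ((1 + t • A).mulVec τ₁) ((1 + t • A).mulVec τ₂) ⬝ᵥ
        crossProduct ((1 + t • A).mulVec τ₁) ((1 + t • A).mulVec τ₂)))⁻¹ •
        crossProduct ((1 + t • A).mulVec τ₁) ((1 + t • A).mulVec τ₂))
    (Pt : ℝ → Matrix (Fin 3) (Fin 3) ℝ) (hPt : ∀ t, Pt t = 1 - vecMulVec (n t) (n t))
    (G : ℝ → Fin 3 → ℝ)
    (hG : ∀ t : ℝ, G t = (Pt t).mulVec ((((1 + t • A)ᵀ)⁻¹).mulVec g)) :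
    G 0 = P.mulVec g ∧
      HasDerivAt G
        (-((P * Aᵀ).mulVec (P.mulVec g)) + (P.mulVec g ⬝ᵥ (P * Aᵀ).mulVec ν) • ν) 0 := by
  classical
  set c₀ : Fin 3 → ℝ := crossProduct τ₁ τ₂ with hc₀def
  have hc0ne : c₀ ≠ 0 := crossProduct_ne_zero_iff_linearIndependent.mpr hτ
  have hQ : 0 < c₀ ⬝ᵥ c₀ := by
    refine lt_of_le_of_ne (Finset.sum_nonneg fun i _ => mul_self_nonneg _) ?_
    exact fun h => hc0ne (dotProduct_self_eq_zero.mp h.symm)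
  set u₁ : Fin 3 → ℝ := A.mulVec τ₁ with hu₁def
  set u₂ : Fin 3 → ℝ := A.mulVec τ₂ with hu₂def
  set e : Fin 3 → ℝ := crossProduct u₁ τ₂ + crossProduct τ₁ u₂ with hedef
  set f2 : Fin 3 → ℝ := crossProduct u₁ u₂ with hf2def
  set c : ℝ → Fin 3 → ℝ :=
    fun t => crossProduct ((1 + t • A).mulVec τ₁) ((1 + t • A).mulVec τ₂) with hcdef
  -- polynomial expansion of c
  have hexpand : ∀ t : ℝ, c t = c₀ + t • e + (t * t) • f2 := by
    intro t
    rw [hcdef]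
    simp only [Matrix.add_mulVec, Matrix.one_mulVec, Matrix.smul_mulVec,
      map_add, _root_.map_smul, LinearMap.add_apply, LinearMap.smul_apply,
      hedef, hc₀def, hf2def, hu₁def, hu₂def]
    module
  have hc0 : c 0 = c₀ := by rw [hexpand]; simp
  -- derivative of c
  have hcD : HasDerivAt c e 0 := by
    have h1 : HasDerivAt (fun t : ℝ => c₀ + t • e + (t * t) • f2) e 0 := by
      have ha : HasDerivAt (fun t : ℝ => t • e) ((1:ℝ) • e) 0 := (hasDerivAt_id 0).smul_const e
      have hb : HasDerivAt (fun t : ℝ => (t * t) • f2) (((1:ℝ) * 0 + 0 * 1) • f2) 0 :=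
        ((hasDerivAt_id 0).mul (hasDerivAt_id 0)).smul_const f2
      simpa using ((hasDerivAt_const (0:ℝ) c₀).fun_add ha).fun_add hb
    exact h1.congr_of_eventuallyEq (Filter.Eventually.of_forall hexpand)
  -- the transported inverse part
  set w : ℝ → Fin 3 → ℝ := fun t => (Ring.inverse (1 + t • A))ᵀ.mulVec g with hwdef
  have hw : ∀ t : ℝ, (((1 + t • A)ᵀ)⁻¹).mulVec g = w t := by
    intro t
    rw [hwdef, ← Matrix.transpose_nonsing_inv, Matrix.nonsing_inv_eq_ringInverse]
  have hw0 : w 0 = g := by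
    rw [hwdef]; simp
  have hBD : HasDerivAt (fun t : ℝ => 1 + t • A) A 0 := by
    have := ((hasDerivAt_id (0:ℝ)).smul_const A).const_add (1 : Matrix (Fin 3) (Fin 3) ℝ)
    simp only [id, one_smul] at this
    exact this
  have h1 : HasFDerivAt (Ring.inverse (M₀ := Matrix (Fin 3) (Fin 3) ℝ))
      (-(ContinuousLinearMap.mulLeftRight ℝ _ 1 1)) (1 + (0:ℝ) • A) := by
    simpa using hasFDerivAt_ringInverse (𝕜 := ℝ) (1 : (Matrix (Fin 3) (Fin 3) ℝ)ˣ)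
  have hID : HasDerivAt (fun t : ℝ => Ring.inverse (1 + t • A)) (-A) 0 := by
    have := h1.comp_hasDerivAt 0 hBD
    simp only [Function.comp_def, ContinuousLinearMap.neg_apply,
      ContinuousLinearMap.mulLeftRight_apply, one_mul, mul_one] at this
    exact this
  have hE : ∀ i j : Fin 3,
      HasDerivAt (fun t : ℝ => Ring.inverse (1 + t • A) i j) (-(A i j)) 0 := fun i j => by
    have := (entryCLM i j).hasFDerivAt.comp_hasDerivAt 0 hID
    simp only [Function.comp_def, entryCLM_apply, Matrix.neg_apply] at this
    exact this
  have hwD : HasDerivAt w (-(Aᵀ.mulVec g)) 0 := by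
    rw [hwdef]
    apply hasDerivAt_pi.mpr
    intro i
    have key : HasDerivAt (fun t : ℝ => ∑ j, Ring.inverse (1 + t • A) j i * g j)
        (∑ j, -(A j i) * g j) 0 :=
      HasDerivAt.fun_sum fun j _ => (hE j i).mul_const (g j)
    have h2 : (fun t : ℝ => ∑ j, Ring.inverse (1 + t • A) j i * g j)
        = fun t : ℝ => (Ring.inverse (1 + t • A))ᵀ.mulVec g i := by
      funext t; simp [Matrix.mulVec, dotProduct, Matrix.transpose_apply]
    rw [h2] at key
    refine key.congr_deriv ?_
    simp [Matrix.mulVec, dotProduct, Matrix.transpose_apply, neg_mul, Finset.sum_neg_distrib]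
  -- G in rational form
  have hGF : G = fun t => w t - ((c t ⬝ᵥ w t) / (c t ⬝ᵥ c t)) • c t := by
    funext t
    rw [hG t, hPt t, hn t, hw t]
    exact proj_mulVec _ (w t)
  -- derivative assembly
  have hnum : HasDerivAt (fun t => c t ⬝ᵥ w t) (e ⬝ᵥ g + c₀ ⬝ᵥ -(Aᵀ.mulVec g)) 0 := by
    simpa [hc0, hw0] using hasDerivAt_dot3 hcD hwD
  have hden : HasDerivAt (fun t => c t ⬝ᵥ c t) (e ⬝ᵥ c₀ + c₀ ⬝ᵥ e) 0 := by
    simpa [hc0] using hasDerivAt_dot3 hcD hcD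
  have hden0 : (fun t => c t ⬝ᵥ c t) 0 ≠ 0 := by simpa [hc0] using hQ.ne'
  have hq := hnum.fun_div hden hden0
  have hFD := hwD.fun_sub (hq.fun_smul hcD)
  rw [hc0, hw0] at hFD hq
  have hGD : HasDerivAt G
      (-(Aᵀ.mulVec g) -
        (((c₀ ⬝ᵥ g) / (c₀ ⬝ᵥ c₀)) • e +
          (((e ⬝ᵥ g + c₀ ⬝ᵥ -(Aᵀ.mulVec g)) * (c₀ ⬝ᵥ c₀) -
            (c₀ ⬝ᵥ g) * (e ⬝ᵥ c₀ + c₀ ⬝ᵥ e)) / (c₀ ⬝ᵥ c₀) ^ 2) • c₀)) 0 := by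
    rw [hGF]
    exact hFD
  -- value of G at 0
  have hPx : ∀ x, P.mulVec x = x - ((c₀ ⬝ᵥ x) / (c₀ ⬝ᵥ c₀)) • c₀ := by
    intro x; rw [hP, hν]; exact proj_mulVec _ x
  have hG0 : G 0 = P.mulVec g := by
    rw [hGF, hPx]
    simp [hc0, hw0]
  refine ⟨hG0, ?_⟩
  convert hGD using 1
  -- final algebraic identity
  have hek : e = A.trace • c₀ - Aᵀ.mulVec c₀ := by
    rw [hedef, hu₁def, hu₂def, hc₀def]; exact cross_deriv A τ₁ τ₂
  set m : Fin 3 → ℝ := Aᵀ.mulVec g with hmdef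
  set k : Fin 3 → ℝ := Aᵀ.mulVec c₀ with hkdef
  set T : ℝ := A.trace with hTdef
  have hlast : (P.mulVec g ⬝ᵥ (P * Aᵀ).mulVec ν) • ν
      = (((P.mulVec g) ⬝ᵥ (P.mulVec k)) / (c₀ ⬝ᵥ c₀)) • c₀ := by
    rw [hν, ← Matrix.mulVec_mulVec, Matrix.mulVec_smul, Matrix.mulVec_smul, hkdef]
    rw [dotProduct_smul, smul_eq_mul, smul_smul]
    congr 1
    set s : ℝ := Real.sqrt (c₀ ⬝ᵥ c₀) with hsdef
    have hs2 : s * s = c₀ ⬝ᵥ c₀ := Real.mul_self_sqrt hQ.le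
    rw [div_eq_mul_inv, ← hs2, mul_inv]
    ring
  have hfirst : ((P * Aᵀ).mulVec (P.mulVec g)) = P.mulVec (Aᵀ.mulVec (P.mulVec g)) :=
    (Matrix.mulVec_mulVec _ _ _).symm
  have hpg : P.mulVec g = g - ((c₀ ⬝ᵥ g) / (c₀ ⬝ᵥ c₀)) • c₀ := hPx g
  have hAtpg : Aᵀ.mulVec (g - ((c₀ ⬝ᵥ g) / (c₀ ⬝ᵥ c₀)) • c₀)
      = m - ((c₀ ⬝ᵥ g) / (c₀ ⬝ᵥ c₀)) • k := by
    rw [Matrix.mulVec_sub, Matrix.mulVec_smul, hmdef, hkdef]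
  rw [hlast, hfirst, hek, hpg, hAtpg, hPx, hPx]
  have hQ' : c₀ 0 * c₀ 0 + c₀ 1 * c₀ 1 + c₀ 2 * c₀ 2 ≠ 0 := by
    have := hQ.ne'
    simpa [dotProduct, Fin.sum_univ_three] using this
  funext i
  simp only [dotProduct, Fin.sum_univ_three, Pi.add_apply, Pi.sub_apply, Pi.smul_apply,
    Pi.neg_apply, smul_eq_mul]
  have hQ2 : c₀ 0 ^ 2 + c₀ 1 ^ 2 + c₀ 2 ^ 2 ≠ 0 := by rw [sq, sq, sq]; exact hQ'
  field_simp
  ring
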